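/- Let V : ℝ^d → ℝ^d be a differentiable vector field and let p, q : ℝ × ℝ^d → ℝ be C² functions. Then for every x ∈ ℝ^d, D_m(⟨∇_x q, ∇_x p⟩)(x) = ⟨∇(D_m p)(x), ∇_x q(0,x)⟩ − ⟨∇_x q(0,x), (DV(x) + DV(x)ᵀ) ∇_x p(0,x)⟩ + ⟨∇_x p(0,x), ∇(D_m q)(x)⟩, where ⟨·,·⟩ is the Euclidean inner product on ℝ^d. -/

import Mathlib

open RealInnerProductSpace

noncomputable section AuxMDG

variable {d : ℕ}

local notation "E" => EuclideanSpace ℝ (Fin d)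
local notation "td" => InnerProductSpace.toDual ℝ (EuclideanSpace ℝ (Fin d))

theorem auxMDG_key (V : EuclideanSpace ℝ (Fin d) → EuclideanSpace ℝ (Fin d))
    (hV : Differentiable ℝ V)
    (f : ℝ × EuclideanSpace ℝ (Fin d) → ℝ) (hf : ContDiff ℝ 2 f)
    (x : EuclideanSpace ℝ (Fin d)) :
    ∃ A : EuclideanSpace ℝ (Fin d),
      HasDerivAt (fun t : ℝ => gradient (fun z => f (t, z)) (x + t • V x)) A 0 ∧
      gradient (fun z => deriv (fun t : ℝ => f (t, z + t • V z)) 0) x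
        = A + (ContinuousLinearMap.adjoint (fderiv ℝ V x))
            (gradient (fun z => f (0, z)) x) := by
  have hf1 : Differentiable ℝ f := hf.differentiable (by norm_num)
  have hΦ : ContDiff ℝ 1 (fderiv ℝ f) := hf.fderiv_right (by norm_num)
  set Φ := fderiv ℝ f with hΦdef
  set inr := ContinuousLinearMap.inr ℝ ℝ (EuclideanSpace ℝ (Fin d)) with hinr
  -- the gradient in the second variable, as a function of the full point
  set G : ℝ × EuclideanSpace ℝ (Fin d) → EuclideanSpace ℝ (Fin d) :=
    fun w => (td).symm ((Φ w).comp inr) with hGdef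
  have hgradG : ∀ w : ℝ × EuclideanSpace ℝ (Fin d),
      gradient (fun z => f (w.1, z)) w.2 = G w := by
    intro w
    have h1 : HasFDerivAt (fun z : EuclideanSpace ℝ (Fin d) => (w.1, z)) inr w.2 :=
      hasFDerivAt_prodMk_right w.1 w.2
    have h2 : HasFDerivAt f (Φ w) w := (hf1 w).hasFDerivAt
    have h3 : HasFDerivAt (fun z => f (w.1, z)) ((Φ w).comp inr) w.2 := h2.comp w.2 h1
    simp only [gradient]
    rw [h3.fderiv]
  -- derivative of G along the path
  set precomp : ((ℝ × EuclideanSpace ℝ (Fin d)) →L[ℝ] ℝ) →L[ℝ]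
      (EuclideanSpace ℝ (Fin d) →L[ℝ] ℝ) :=
    (ContinuousLinearMap.compL ℝ (EuclideanSpace ℝ (Fin d))
      (ℝ × EuclideanSpace ℝ (Fin d)) ℝ).flip inr with hprecomp
  set L : ((ℝ × EuclideanSpace ℝ (Fin d)) →L[ℝ] ℝ) →L[ℝ] EuclideanSpace ℝ (Fin d) :=
    ((td).symm.toContinuousLinearEquiv.toContinuousLinearMap).comp precomp with hL
  have hGL : ∀ w, G w = L (Φ w) := fun w => rfl
  have hΦdiff : DifferentiableAt ℝ Φ (0, x) := (hΦ.differentiable one_ne_zero) (0, x)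
  set Φ' := fderiv ℝ Φ (0, x) with hΦ'
  have hGd : HasFDerivAt G (L.comp Φ') (0, x) := by
    have := L.hasFDerivAt.comp (0, x) hΦdiff.hasFDerivAt
    exact this
  -- the path
  have hpath : HasDerivAt (fun t : ℝ => ((t, x + t • V x) : ℝ × EuclideanSpace ℝ (Fin d)))
      (1, V x) 0 := by
    have h1 : HasDerivAt (fun t : ℝ => x + t • V x) (V x) 0 := by
      simpa using ((hasDerivAt_id (0:ℝ)).smul_const (V x)).const_add x
    simpa using (hasDerivAt_id (0:ℝ)).prodMk h1
  set A : EuclideanSpace ℝ (Fin d) := (td).symm ((Φ' (1, V x)).comp inr) with hA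
  refine ⟨A, ?_, ?_⟩
  · have h := hGd.comp_hasDerivAt_of_eq 0 hpath (by simp)
    have heq : (fun t : ℝ => gradient (fun z => f (t, z)) (x + t • V x))
        = fun t : ℝ => G (t, x + t • V x) := funext fun t => hgradG (t, x + t • V x)
    rw [heq]
    have hsimp : (L.comp Φ') (1, V x) = A := rfl
    exact h
  · -- gradient of the material derivative
    have hgz : ∀ z : EuclideanSpace ℝ (Fin d),
        deriv (fun t : ℝ => f (t, z + t • V z)) 0 = Φ (0, z) (1, V z) := by
      intro z
      have hpz : HasDerivAt (fun t : ℝ => ((t, z + t • V z) : ℝ × E)) (1, V z) 0 := by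
        have h1 : HasDerivAt (fun t : ℝ => z + t • V z) (V z) 0 := by
          simpa using ((hasDerivAt_id (0:ℝ)).smul_const (V z)).const_add z
        simpa using (hasDerivAt_id (0:ℝ)).prodMk h1
      have := (((hf1 (0, z)).hasFDerivAt).comp_hasDerivAt_of_eq 0 hpz (by simp)).deriv
      simpa [Function.comp_def] using this
    have hfun : (fun z => deriv (fun t : ℝ => f (t, z + t • V z)) 0)
        = fun z => Φ (0, z) (1, V z) := funext hgz
    rw [hfun]
    -- compute the fderiv of z ↦ Φ (0,z) (1, V z)
    have hins : HasFDerivAt (fun z : EuclideanSpace ℝ (Fin d) => ((0, z) : ℝ × E)) inr x :=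
      hasFDerivAt_prodMk_right (0:ℝ) x
    have hΨ : HasFDerivAt (fun z : EuclideanSpace ℝ (Fin d) => Φ (0, z)) (Φ'.comp inr) x :=
      hΦdiff.hasFDerivAt.comp x hins
    have hW : HasFDerivAt (fun z : EuclideanSpace ℝ (Fin d) => ((1, V z) : ℝ × E))
        ((0 : EuclideanSpace ℝ (Fin d) →L[ℝ] ℝ).prod (fderiv ℝ V x)) x :=
      (hasFDerivAt_const (1:ℝ) x).prodMk (hV x).hasFDerivAt
    have hD : HasFDerivAt (fun z => Φ (0, z) (1, V z))
        ((Φ (0, x)).comp ((0 : EuclideanSpace ℝ (Fin d) →L[ℝ] ℝ).prod (fderiv ℝ V x))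
          + (Φ'.comp inr).flip ((1, V x) : ℝ × E)) x := hΨ.clm_apply hW
    have hsymm : IsSymmSndFDerivAt ℝ f (0, x) :=
      hf.contDiffAt.isSymmSndFDerivAt (by simp)
    -- identify the derivative with the claimed gradient
    have hclm : ((Φ (0, x)).comp ((0 : EuclideanSpace ℝ (Fin d) →L[ℝ] ℝ).prod (fderiv ℝ V x))
          + (Φ'.comp inr).flip ((1, V x) : ℝ × E))
        = td (A + (ContinuousLinearMap.adjoint (fderiv ℝ V x))
            (gradient (fun z => f (0, z)) x)) := by
      ext h
      have e1 : (⟪A, h⟫ : ℝ) = Φ' (1, V x) (0, h) := by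
        rw [hA, InnerProductSpace.toDual_symm_apply]
        rfl
      have e2 : (⟪(ContinuousLinearMap.adjoint (fderiv ℝ V x))
            (gradient (fun z => f (0, z)) x), h⟫ : ℝ)
          = Φ (0, x) (0, fderiv ℝ V x h) := by
        rw [ContinuousLinearMap.adjoint_inner_left, hgradG (0, x)]
        show (⟪(td).symm ((Φ (0, x)).comp inr), fderiv ℝ V x h⟫ : ℝ) = _
        rw [InnerProductSpace.toDual_symm_apply]
        rfl
      have e3 : Φ' (0, h) (1, V x) = Φ' (1, V x) (0, h) := hsymm (0, h) (1, V x)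
      simp only [ContinuousLinearMap.add_apply, ContinuousLinearMap.comp_apply,
        ContinuousLinearMap.prod_apply, ContinuousLinearMap.zero_apply,
        ContinuousLinearMap.flip_apply, ContinuousLinearMap.coe_comp', Function.comp_apply,
        InnerProductSpace.toDual_apply_apply, inner_add_left]
      rw [show inr h = ((0, h) : ℝ × E) from rfl, e3, ← e1, ← e2]
      ring
    rw [gradient, hD.fderiv, hclm]
    simp

end AuxMDG

/-- The material derivative of `⟨∇_x q, ∇_x p⟩` with respect to the perturbation
of identity `F_t = id + t V` satisfies
`D_m(⟨∇_x q, ∇_x p⟩)(x) = ⟨∇(D_m p)(x), ∇_x q(0,x)⟩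
  − ⟨∇_x q(0,x), (DV(x) + DV(x)ᵀ) ∇_x p(0,x)⟩ + ⟨∇_x p(0,x), ∇(D_m q)(x)⟩`. -/
theorem material_derivative_of_gradient_inner
    {d : ℕ} (V : EuclideanSpace ℝ (Fin d) → EuclideanSpace ℝ (Fin d))
    (hV : Differentiable ℝ V)
    (p q : ℝ × EuclideanSpace ℝ (Fin d) → ℝ)
    (hp : ContDiff ℝ 2 p) (hq : ContDiff ℝ 2 q)
    (x : EuclideanSpace ℝ (Fin d)) :
    deriv (fun t : ℝ =>
        ⟪gradient (fun z => q (t, z)) (x + t • V x),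
          gradient (fun z => p (t, z)) (x + t • V x)⟫) 0
      = ⟪gradient (fun z => deriv (fun t : ℝ => p (t, z + t • V z)) 0) x,
            gradient (fun z => q (0, z)) x⟫
        - ⟪gradient (fun z => q (0, z)) x,
            (fderiv ℝ V x) (gradient (fun z => p (0, z)) x)
              + (ContinuousLinearMap.adjoint (fderiv ℝ V x))
                  (gradient (fun z => p (0, z)) x)⟫
        + ⟪gradient (fun z => p (0, z)) x,
            gradient (fun z => deriv (fun t : ℝ => q (t, z + t • V z)) 0) x⟫ := by
  obtain ⟨Aq, hAqd, hAqg⟩ := auxMDG_key V hV q hq x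
  obtain ⟨Ap, hApd, hApg⟩ := auxMDG_key V hV p hp x
  have hder := (hAqd.inner (𝕜 := ℝ) hApd).deriv
  rw [hder]
  simp only [zero_smul, add_zero]
  rw [hApg, hAqg]
  set gp0 := gradient (fun z => p (0, z)) x
  set gq0 := gradient (fun z => q (0, z)) x
  set T := fderiv ℝ V x
  simp only [inner_add_left, inner_add_right]
  rw [ContinuousLinearMap.adjoint_inner_left, ContinuousLinearMap.adjoint_inner_right,
    ContinuousLinearMap.adjoint_inner_right]
  have c1 := real_inner_comm gq0 Ap
  have c2 := real_inner_comm Aq gp0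
  have c3 := real_inner_comm gq0 (T gp0)
  have c4 := real_inner_comm gp0 (T gq0)
  linarith
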